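/- For every valuation profile v, supply k, and prices p ≥ q ≥ 0, the residual surplus of the two-level (p,q)-lottery is at most the sum of the residual surpluses of the one-level p-lottery and the one-level q-lottery: L_{p,q}(v) ≤ L_p(v) + L_q(v). Consequently there exists r ∈ {p,q} with L_r(v) ≥ L_{p,q}(v)/2. -/
import Mathlib

open Finset

/-- Expected residual surplus of the one-level `r`-lottery with `k` units:
agents with value `> r` win (uniformly at random if there are more than `k` of
them) and pay `r`. -/
noncomputable def oneLevelLottery (n k : ℕ) (r : ℝ) (v : Fin n → ℝ) : ℝ :=
  let W := Finset.univ.filter (fun i => r < v i)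
  min 1 ((k : ℝ) / W.card) * ∑ i ∈ W, (v i - r)

/-- Expected residual surplus of the two-level `(p,q)`-lottery with `k` units:
with `S = {i : v i > p}`, `T = {i : q < v i ≤ p}`, `s = |S|`, `t = |T|`; if
`s > k` it is a `k`-unit `p`-lottery; if `s + t ≤ k` all of `S ∪ T` win at
price `q`; otherwise agents in `S` win paying `p - (p-q)(k-s+1)/(t+1)` and the
remaining `k - s` units go uniformly at random to `T` at price `q`. -/
noncomputable def twoLevelLottery (n k : ℕ) (p q : ℝ) (v : Fin n → ℝ) : ℝ :=
  let S := Finset.univ.filter (fun i => p < v i)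
  let T := Finset.univ.filter (fun i => q < v i ∧ v i ≤ p)
  let s := S.card
  let t := T.card
  if k < s then oneLevelLottery n k p v
  else if s + t ≤ k then ∑ i ∈ S ∪ T, (v i - q)
  else (∑ i ∈ S, (v i - (p - (p - q) * ((k : ℝ) - s + 1) / (t + 1))))
        + ((k : ℝ) - s) / t * ∑ i ∈ T, (v i - q)

lemma oneLevel_nonneg (n k : ℕ) (r : ℝ) (v : Fin n → ℝ) : 0 ≤ oneLevelLottery n k r v := by
  unfold oneLevelLottery
  dsimp only
  refine mul_nonneg (le_min zero_le_one (by positivity)) (Finset.sum_nonneg fun i hi => ?_)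
  simp only [Finset.mem_filter] at hi
  linarith [hi.2]

theorem two_level_le_sum_one_level (n k : ℕ) (p q : ℝ) (v : Fin n → ℝ)
    (hpq : q ≤ p) (hq : 0 ≤ q) :
    twoLevelLottery n k p q v ≤ oneLevelLottery n k p v + oneLevelLottery n k q v ∧
      ∃ r ∈ ({p, q} : Set ℝ), twoLevelLottery n k p q v / 2 ≤ oneLevelLottery n k r v := by
  have key : twoLevelLottery n k p q v ≤ oneLevelLottery n k p v + oneLevelLottery n k q v := by
    classical
    unfold twoLevelLottery
    dsimp only
    set S := Finset.univ.filter (fun i : Fin n => p < v i) with hSdef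
    set T := Finset.univ.filter (fun i : Fin n => q < v i ∧ v i ≤ p) with hTdef
    have hST : Disjoint S T := by
      rw [Finset.disjoint_left]
      intro i hiS hiT
      rw [hSdef, Finset.mem_filter] at hiS
      rw [hTdef, Finset.mem_filter] at hiT
      linarith [hiS.2, hiT.2.2]
    have hUq : Finset.univ.filter (fun i : Fin n => q < v i) = S ∪ T := by
      ext i
      simp only [hSdef, hTdef, Finset.mem_filter, Finset.mem_union, Finset.mem_univ, true_and]
      constructor
      · intro h
        rcases le_or_gt (v i) p with h' | h'
        · exact Or.inr ⟨h, h'⟩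
        · exact Or.inl h'
      · rintro (h | ⟨h, _⟩)
        · linarith
        · exact h
    have hcard : (S ∪ T).card = S.card + T.card := Finset.card_union_of_disjoint hST
    have hq_eq : oneLevelLottery n k q v
        = min 1 ((k : ℝ) / ((S ∪ T).card : ℝ)) * ∑ i ∈ S ∪ T, (v i - q) := by
      unfold oneLevelLottery
      dsimp only
      rw [hUq]
    have hp_eq : oneLevelLottery n k p v
        = min 1 ((k : ℝ) / (S.card : ℝ)) * ∑ i ∈ S, (v i - p) := by
      unfold oneLevelLottery
      dsimp only
    have hBS : 0 ≤ ∑ i ∈ S, (v i - p) := by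
      refine Finset.sum_nonneg fun i hi => ?_
      rw [hSdef, Finset.mem_filter] at hi
      linarith [hi.2]
    have hBT : 0 ≤ ∑ i ∈ T, (v i - q) := by
      refine Finset.sum_nonneg fun i hi => ?_
      rw [hTdef, Finset.mem_filter] at hi
      linarith [hi.2.1]
    have hCq : (S.card : ℝ) * (p - q) ≤ ∑ i ∈ S, (v i - q) := by
      calc (S.card : ℝ) * (p - q) = ∑ _i ∈ S, (p - q) := by
            rw [Finset.sum_const, nsmul_eq_mul]
        _ ≤ ∑ i ∈ S, (v i - q) := by
            refine Finset.sum_le_sum fun i hi => ?_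
            rw [hSdef, Finset.mem_filter] at hi
            linarith [hi.2]
    have hCqpos : 0 ≤ ∑ i ∈ S, (v i - q) := by
      refine Finset.sum_nonneg fun i hi => ?_
      rw [hSdef, Finset.mem_filter] at hi
      linarith [hi.2]
    by_cases h1 : k < S.card
    · rw [if_pos h1]
      linarith [oneLevel_nonneg n k q v]
    rw [if_neg h1]
    push_neg at h1
    by_cases h2 : S.card + T.card ≤ k
    · rw [if_pos h2]
      rcases Nat.eq_zero_or_pos (S ∪ T).card with h0 | h0
      · have he : S ∪ T = ∅ := Finset.card_eq_zero.mp h0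
        rw [he]
        simp only [Finset.sum_empty]
        linarith [oneLevel_nonneg n k p v, oneLevel_nonneg n k q v]
      · have hmin : min 1 ((k : ℝ) / ((S ∪ T).card : ℝ)) = 1 := by
          refine min_eq_left ?_
          rw [le_div_iff₀ (by exact_mod_cast h0), one_mul]
          have : (S ∪ T).card ≤ k := by omega
          exact_mod_cast this
        rw [hq_eq, hmin, one_mul]
        linarith [oneLevel_nonneg n k p v]
    · rw [if_neg h2]
      push_neg at h2
      have ht : 0 < T.card := by omega
      have htr : (0 : ℝ) < (T.card : ℝ) := by exact_mod_cast ht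
      have hstr : (0 : ℝ) < (S.card : ℝ) + (T.card : ℝ) := by positivity
      have hsk : (S.card : ℝ) ≤ (k : ℝ) := by exact_mod_cast h1
      have hkst : (k : ℝ) < (S.card : ℝ) + (T.card : ℝ) := by exact_mod_cast h2
      have hsr : (0 : ℝ) ≤ (S.card : ℝ) := Nat.cast_nonneg _
      have hq_val : oneLevelLottery n k q v
          = (k : ℝ) / ((S.card : ℝ) + (T.card : ℝ))
            * ((∑ i ∈ S, (v i - q)) + ∑ i ∈ T, (v i - q)) := by
        rw [hq_eq, hcard, Finset.sum_union hST]
        congr 1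
        push_cast
        exact min_eq_right (le_of_lt ((div_lt_one hstr).mpr hkst))
      have hop : (∑ i ∈ S, (v i - p)) ≤ oneLevelLottery n k p v := by
        rcases Nat.eq_zero_or_pos S.card with hs0 | hs
        · have he : S = ∅ := Finset.card_eq_zero.mp hs0
          rw [he, Finset.sum_empty]
          exact oneLevel_nonneg n k p v
        · rw [hp_eq]
          have hmin : min 1 ((k : ℝ) / (S.card : ℝ)) = 1 :=
            min_eq_left ((one_le_div (by exact_mod_cast hs)).mpr hsk)
          rw [hmin, one_mul]
      have hsum : (∑ i ∈ S, (v i - (p - (p - q) * ((k : ℝ) - S.card + 1) / (T.card + 1))))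
          = (∑ i ∈ S, (v i - p))
            + (S.card : ℝ) * ((p - q) * ((k : ℝ) - S.card + 1) / (T.card + 1)) := by
        simp only [Finset.sum_sub_distrib, Finset.sum_const, nsmul_eq_mul]
        ring
      have hA : ((k : ℝ) - S.card) / T.card * (∑ i ∈ T, (v i - q))
          ≤ (k : ℝ) / ((S.card : ℝ) + T.card) * (∑ i ∈ T, (v i - q)) := by
        refine mul_le_mul_of_nonneg_right ?_ hBT
        rw [div_le_div_iff₀ htr hstr]
        nlinarith [mul_nonneg hsr (by linarith : (0:ℝ) ≤ (S.card:ℝ) + T.card - k)]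
      have hB : (S.card : ℝ) * ((p - q) * ((k : ℝ) - S.card + 1) / (T.card + 1))
          ≤ (k : ℝ) / ((S.card : ℝ) + T.card) * (∑ i ∈ S, (v i - q)) := by
        rcases Nat.eq_zero_or_pos S.card with hs0 | hs
        · have he : S = ∅ := Finset.card_eq_zero.mp hs0
          rw [he]
          simp only [Finset.card_empty, Finset.sum_empty, Nat.cast_zero, zero_mul, mul_zero, le_refl]
        · have hs1 : (1 : ℝ) ≤ (S.card : ℝ) := by exact_mod_cast hs
          have hratio : ((k : ℝ) - S.card + 1) / ((T.card : ℝ) + 1)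
              ≤ (k : ℝ) / ((S.card : ℝ) + T.card) := by
            rw [div_le_div_iff₀ (by linarith) hstr]
            nlinarith [mul_nonneg (by linarith : (0:ℝ) ≤ (S.card:ℝ) - 1)
              (by linarith : (0:ℝ) ≤ (S.card:ℝ) + T.card - k)]
          calc (S.card : ℝ) * ((p - q) * ((k : ℝ) - S.card + 1) / (T.card + 1))
              = ((S.card : ℝ) * (p - q)) * (((k : ℝ) - S.card + 1) / ((T.card : ℝ) + 1)) := by
                ring
            _ ≤ ((S.card : ℝ) * (p - q)) * ((k : ℝ) / ((S.card : ℝ) + T.card)) := by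
                refine mul_le_mul_of_nonneg_left hratio ?_
                exact mul_nonneg hsr (by linarith)
            _ = (k : ℝ) / ((S.card : ℝ) + T.card) * ((S.card : ℝ) * (p - q)) := by ring
            _ ≤ (k : ℝ) / ((S.card : ℝ) + T.card) * (∑ i ∈ S, (v i - q)) := by
                refine mul_le_mul_of_nonneg_left hCq ?_
                positivity
      have hexp : (k : ℝ) / ((S.card : ℝ) + (T.card : ℝ))
            * ((∑ i ∈ S, (v i - q)) + ∑ i ∈ T, (v i - q))
          = (k : ℝ) / ((S.card : ℝ) + T.card) * (∑ i ∈ S, (v i - q))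
            + (k : ℝ) / ((S.card : ℝ) + T.card) * (∑ i ∈ T, (v i - q)) :=
        mul_add _ _ _
      rw [hq_val, hsum, hexp]
      linarith
  refine ⟨key, ?_⟩
  rcases le_total (oneLevelLottery n k p v) (oneLevelLottery n k q v) with h | h
  · exact ⟨q, Or.inr rfl, by linarith⟩
  · exact ⟨p, Or.inl rfl, by linarith⟩
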